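/- Let N ≥ 3, y ∈ B(0,1) with d = dist(y, ∂B(0,1)), and ε > 0. Then ∫_{B(y,d)} (V^{ε,y})^{(N+2)/(N-2)} dx = ε^{N/2−1} ∫_{ℝ^N} V^{(N+2)/(N-2)} dx + O(ε^{(N+2)/2}/d²). -/

import Mathlib

open Metric MeasureTheory

noncomputable def bubble (N : ℕ) (x : EuclideanSpace ℝ (Fin N)) : ℝ :=
  ((N : ℝ) * ((N : ℝ) - 2)) ^ (((N : ℝ) - 2) / 4) *
    (1 + ‖x‖ ^ 2) ^ ((2 - (N : ℝ)) / 2)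

noncomputable def bubbleScaled (N : ℕ) (ε : ℝ) (y x : EuclideanSpace ℝ (Fin N)) : ℝ :=
  ε ^ ((2 - (N : ℝ)) / 2) * bubble N (ε⁻¹ • (x - y))

open Set Module
open scoped Pointwise

lemma bubble_nonneg (N : ℕ) (hN : 3 ≤ N) (x : EuclideanSpace ℝ (Fin N)) : 0 ≤ bubble N x := by
  have h3 : (3:ℝ) ≤ (N:ℝ) := by exact_mod_cast hN
  have hA : (0:ℝ) ≤ (N:ℝ) * ((N:ℝ) - 2) := by nlinarith
  exact mul_nonneg (Real.rpow_nonneg hA _) (Real.rpow_nonneg (by positivity) _)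

lemma bubble_rpow_eq (N : ℕ) (hN : 3 ≤ N) (x : EuclideanSpace ℝ (Fin N)) :
    bubble N x ^ (((N : ℝ) + 2) / ((N : ℝ) - 2))
      = (((N : ℝ) * ((N : ℝ) - 2)) ^ ((((N : ℝ) - 2) / 4) * (((N : ℝ) + 2) / ((N : ℝ) - 2)))) *
        (1 + ‖x‖ ^ 2) ^ (-((N : ℝ) + 2) / 2) := by
  have h3 : (3:ℝ) ≤ (N:ℝ) := by exact_mod_cast hN
  have hA : (0:ℝ) ≤ (N:ℝ) * ((N:ℝ) - 2) := by nlinarith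
  have hB : (0:ℝ) ≤ 1 + ‖x‖ ^ 2 := by positivity
  have hne : (N:ℝ) - 2 ≠ 0 := by linarith
  have hexp : (2 - (N:ℝ)) / 2 * (((N:ℝ) + 2) / ((N:ℝ) - 2)) = -((N:ℝ) + 2) / 2 := by
    field_simp
    ring
  rw [bubble, Real.mul_rpow (Real.rpow_nonneg hA _) (Real.rpow_nonneg hB _),
    ← Real.rpow_mul hA, ← Real.rpow_mul hB, hexp]

lemma bubble_rpow_integrable (N : ℕ) (hN : 3 ≤ N) :
    Integrable (fun x : EuclideanSpace ℝ (Fin N) =>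
      bubble N x ^ (((N : ℝ) + 2) / ((N : ℝ) - 2))) := by
  have h3 : (3:ℝ) ≤ (N:ℝ) := by exact_mod_cast hN
  have hlt : (finrank ℝ (EuclideanSpace ℝ (Fin N)) : ℝ) < (N : ℝ) + 2 := by
    rw [finrank_euclideanSpace_fin]; linarith
  have h := (integrable_rpow_neg_one_add_norm_sq
      (μ := (volume : Measure (EuclideanSpace ℝ (Fin N)))) hlt).const_mul
      (((N : ℝ) * ((N : ℝ) - 2)) ^ ((((N : ℝ) - 2) / 4) * (((N : ℝ) + 2) / ((N : ℝ) - 2))))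
  simp only [bubble_rpow_eq N hN]
  exact h

lemma bubble_tail_bound (N : ℕ) (hN : 3 ≤ N) :
    ∃ C > 0, ∀ R : ℝ, 0 < R →
      ∫ z in (ball (0 : EuclideanSpace ℝ (Fin N)) R)ᶜ,
          (1 + ‖z‖ ^ 2) ^ (-((N : ℝ) + 2) / 2) ≤ C / R ^ 2 := by
  have h3 : (3:ℝ) ≤ (N:ℝ) := by exact_mod_cast hN
  haveI : Nontrivial (EuclideanSpace ℝ (Fin N)) :=
    nontrivial_of_finrank_pos (R := ℝ) (by rw [finrank_euclideanSpace_fin]; omega)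
  set c : ℝ := (N : ℝ) * (volume (ball (0 : EuclideanSpace ℝ (Fin N)) 1)).toReal with hc
  have hc0 : 0 ≤ c := mul_nonneg (by positivity) ENNReal.toReal_nonneg
  refine ⟨c + 1, by positivity, fun R hR => ?_⟩
  set g : ℝ → ℝ := fun t => (1 + t ^ 2) ^ (-((N : ℝ) + 2) / 2) with hg
  have hsub : Ici R ⊆ Ioi (0:ℝ) := fun t ht => lt_of_lt_of_le hR ht
  have key := integral_fun_norm_addHaar (volume : Measure (EuclideanSpace ℝ (Fin N)))
      ((Ici R).indicator g)
  rw [finrank_euclideanSpace_fin] at key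
  have lhs_eq : (∫ x : EuclideanSpace ℝ (Fin N), (Ici R).indicator g ‖x‖)
      = ∫ z in (ball (0 : EuclideanSpace ℝ (Fin N)) R)ᶜ, g ‖z‖ := by
    rw [← integral_indicator measurableSet_ball.compl]
    congr 1
    ext x
    by_cases h : R ≤ ‖x‖
    · rw [Set.indicator_of_mem (Set.mem_Ici.2 h),
        Set.indicator_of_mem (by simpa [mem_ball_zero_iff] using not_lt.2 h)]
    · rw [Set.indicator_of_notMem (fun hh => h (Set.mem_Ici.1 hh)),
        Set.indicator_of_notMem (by simpa [mem_ball_zero_iff] using not_le.1 h)]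
  have rhs_eq : (∫ t in Ioi (0:ℝ), t ^ (N - 1) • (Ici R).indicator g t)
      = ∫ t in Ici R, t ^ (N - 1) * g t := by
    have hind : ∀ t : ℝ, t ^ (N - 1) • (Ici R).indicator g t
        = (Ici R).indicator (fun t => t ^ (N - 1) * g t) t := by
      intro t
      by_cases ht : t ∈ Ici R <;> simp [Set.indicator_of_mem, Set.indicator_of_notMem, ht]
    simp_rw [hind]
    rw [integral_indicator measurableSet_Ici, Measure.restrict_restrict measurableSet_Ici,
      Set.inter_eq_self_of_subset_left hsub]
  have hint2 : IntegrableOn (fun t : ℝ => t ^ (-3 : ℝ)) (Ici R) := by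
    rw [integrableOn_Ici_iff_integrableOn_Ioi]
    exact integrableOn_Ioi_rpow_of_lt (by norm_num) hR
  have hpt : ∀ t ∈ Ici R, t ^ (N - 1) * g t ≤ t ^ (-3 : ℝ) := by
    intro t ht
    have ht0 : 0 < t := lt_of_lt_of_le hR ht
    have h1 : g t ≤ (t ^ 2 : ℝ) ^ (-((N : ℝ) + 2) / 2) := by
      apply Real.rpow_le_rpow_of_nonpos (by positivity) (by nlinarith)
      have hN2 : (0:ℝ) < (N:ℝ) + 2 := by positivity
      linarith [div_nonneg (le_of_lt hN2) (by norm_num : (0:ℝ) ≤ 2)]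
    calc t ^ (N - 1) * g t ≤ t ^ (N - 1) * (t ^ 2 : ℝ) ^ (-((N : ℝ) + 2) / 2) :=
          mul_le_mul_of_nonneg_left h1 (pow_nonneg ht0.le _)
      _ = t ^ (-3 : ℝ) := by
          rw [← Real.rpow_natCast t (N - 1), ← Real.rpow_natCast t 2,
            ← Real.rpow_mul ht0.le, ← Real.rpow_add ht0]
          congr 1
          have hcast : ((N - 1 : ℕ) : ℝ) = (N : ℝ) - 1 := by
            rw [Nat.cast_sub (by omega : 1 ≤ N)]; norm_num
          rw [hcast]; push_cast; ring
  have hint1 : IntegrableOn (fun t : ℝ => t ^ (N - 1) * g t) (Ici R) := by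
    refine hint2.mono' ?_ ?_
    · apply Measurable.aestronglyMeasurable
      fun_prop
    · filter_upwards [ae_restrict_mem measurableSet_Ici] with t ht
      have ht0 : 0 < t := lt_of_lt_of_le hR ht
      rw [Real.norm_eq_abs, abs_of_nonneg
        (mul_nonneg (pow_nonneg ht0.le _) (Real.rpow_nonneg (by positivity) _))]
      exact hpt t ht
  have hmono : ∫ t in Ici R, t ^ (N - 1) * g t ≤ ∫ t in Ici R, t ^ (-3:ℝ) :=
    setIntegral_mono_on hint1 hint2 measurableSet_Ici hpt
  have hI : ∫ t in Ici R, t ^ (-3:ℝ) = R ^ (-2:ℝ) / 2 := by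
    rw [integral_Ici_eq_integral_Ioi, integral_Ioi_rpow_of_lt (by norm_num) hR]
    norm_num
  have final : (∫ z in (ball (0 : EuclideanSpace ℝ (Fin N)) R)ᶜ, g ‖z‖)
      ≤ c * (R ^ (-2:ℝ) / 2) := by
    rw [← lhs_eq, key, nsmul_eq_mul, smul_eq_mul, ← mul_assoc, rhs_eq]
    refine mul_le_mul_of_nonneg_left ?_ hc0
    rw [← hI]; exact hmono
  refine le_trans final ?_
  have hR2 : R ^ (-2:ℝ) = (R ^ 2)⁻¹ := by
    rw [show (-2:ℝ) = -((2:ℕ):ℝ) by norm_num, Real.rpow_neg hR.le, Real.rpow_natCast]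
  rw [hR2]
  have heq : c * ((R ^ 2)⁻¹ / 2) = (c / 2) / R ^ 2 := by ring
  rw [heq]
  gcongr
  linarith

theorem bubble_critical_minus_one_expansion (N : ℕ) (hN : 3 ≤ N) :
    ∃ C > 0, ∀ y : EuclideanSpace ℝ (Fin N), ‖y‖ < 1 → ∀ ε : ℝ, 0 < ε →
      |(∫ x in ball y (1 - ‖y‖),
          (bubbleScaled N ε y x) ^ (((N : ℝ) + 2) / ((N : ℝ) - 2)))
        - ε ^ ((N : ℝ) / 2 - 1) *
            ∫ x : EuclideanSpace ℝ (Fin N),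
              (bubble N x) ^ (((N : ℝ) + 2) / ((N : ℝ) - 2))|
      ≤ C * ε ^ (((N : ℝ) + 2) / 2) / (1 - ‖y‖) ^ 2 := by
  obtain ⟨C₀, hC₀, htail⟩ := bubble_tail_bound N hN
  have h3 : (3:ℝ) ≤ (N:ℝ) := by exact_mod_cast hN
  set c₁ : ℝ := ((N : ℝ) * ((N : ℝ) - 2)) ^
      ((((N : ℝ) - 2) / 4) * (((N : ℝ) + 2) / ((N : ℝ) - 2))) with hc₁
  have hc₁0 : 0 < c₁ := Real.rpow_pos_of_pos (by nlinarith) _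
  refine ⟨c₁ * C₀ + 1, by positivity, fun y hy ε hε => ?_⟩
  set d : ℝ := 1 - ‖y‖ with hd
  have hd0 : 0 < d := by rw [hd]; linarith
  have hR0 : 0 < ε⁻¹ * d := by positivity
  set p : ℝ := ((N : ℝ) + 2) / ((N : ℝ) - 2) with hp
  have hne : (N:ℝ) - 2 ≠ 0 := by linarith
  -- step 1 : pointwise scaling
  have step1 : ∀ x, bubbleScaled N ε y x ^ p
      = ε ^ (-(((N:ℝ) + 2) / 2)) * (bubble N (ε⁻¹ • (x - y)) ^ p) := by
    intro x
    rw [bubbleScaled, Real.mul_rpow (Real.rpow_nonneg hε.le _) (bubble_nonneg N hN _),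
      ← Real.rpow_mul hε.le]
    congr 2
    rw [hp]
    field_simp
    ring
  -- translation
  have trans1 : ∫ x in ball y d, bubble N (ε⁻¹ • (x - y)) ^ p
      = ∫ x in ball (0 : EuclideanSpace ℝ (Fin N)) d, bubble N (ε⁻¹ • x) ^ p := by
    rw [← integral_indicator measurableSet_ball, ← integral_indicator measurableSet_ball,
      ← integral_add_right_eq_self
        (fun x => (ball y d).indicator (fun x => bubble N (ε⁻¹ • (x - y)) ^ p) x) y]
    congr 1
    ext x
    have hmem : x + y ∈ ball y d ↔ x ∈ ball (0 : EuclideanSpace ℝ (Fin N)) d := by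
      simp [mem_ball_iff_norm, add_sub_cancel_right, mem_ball_zero_iff]
    by_cases hx : x ∈ ball (0 : EuclideanSpace ℝ (Fin N)) d
    · rw [Set.indicator_of_mem (hmem.2 hx), Set.indicator_of_mem hx, add_sub_cancel_right]
    · rw [Set.indicator_of_notMem (fun h => hx (hmem.1 h)), Set.indicator_of_notMem hx]
  -- dilation
  have trans2 : ∫ x in ball (0 : EuclideanSpace ℝ (Fin N)) d, bubble N (ε⁻¹ • x) ^ p
      = ε ^ (N : ℕ) * ∫ z in ball (0 : EuclideanSpace ℝ (Fin N)) (ε⁻¹ * d),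
          bubble N z ^ p := by
    have hcs := Measure.setIntegral_comp_smul_of_pos
      (μ := (volume : Measure (EuclideanSpace ℝ (Fin N))))
      (fun z => bubble N z ^ p) (ball (0 : EuclideanSpace ℝ (Fin N)) d) (inv_pos.2 hε)
    have hset : (ε⁻¹ : ℝ) • ball (0 : EuclideanSpace ℝ (Fin N)) d
        = ball (0 : EuclideanSpace ℝ (Fin N)) (ε⁻¹ * d) := by
      rw [smul_ball (inv_ne_zero hε.ne') (0 : EuclideanSpace ℝ (Fin N)) d, smul_zero,
        Real.norm_of_nonneg (inv_nonneg.2 hε.le)]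
    rw [hset, finrank_euclideanSpace_fin, smul_eq_mul, inv_pow, inv_inv] at hcs
    simpa using hcs
  -- main identity
  have main : ∫ x in ball y d, bubbleScaled N ε y x ^ p
      = ε ^ ((N : ℝ) / 2 - 1) *
          ∫ z in ball (0 : EuclideanSpace ℝ (Fin N)) (ε⁻¹ * d), bubble N z ^ p := by
    simp_rw [step1]
    rw [integral_const_mul, trans1, trans2, ← mul_assoc, ← Real.rpow_natCast ε N,
      ← Real.rpow_add hε]
    congr 2
    ring
  have hInt := bubble_rpow_integrable N hN
  have hsplit := integral_add_compl
    (measurableSet_ball (x := (0 : EuclideanSpace ℝ (Fin N))) (ε := ε⁻¹ * d)) hInt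
  rw [main]
  have hdiff : ε ^ ((N : ℝ) / 2 - 1) *
        (∫ z in ball (0 : EuclideanSpace ℝ (Fin N)) (ε⁻¹ * d), bubble N z ^ p)
      - ε ^ ((N : ℝ) / 2 - 1) *
        (∫ x : EuclideanSpace ℝ (Fin N), bubble N x ^ p)
      = -(ε ^ ((N : ℝ) / 2 - 1) *
          ∫ z in (ball (0 : EuclideanSpace ℝ (Fin N)) (ε⁻¹ * d))ᶜ, bubble N z ^ p) := by
    rw [← hsplit]
    ring
  rw [hdiff, abs_neg, abs_of_nonneg (mul_nonneg (Real.rpow_nonneg hε.le _)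
    (setIntegral_nonneg measurableSet_ball.compl
      (fun z _ => Real.rpow_nonneg (bubble_nonneg N hN z) _)))]
  -- tail estimate
  have htb : ∫ z in (ball (0 : EuclideanSpace ℝ (Fin N)) (ε⁻¹ * d))ᶜ, bubble N z ^ p
      ≤ c₁ * (C₀ / (ε⁻¹ * d) ^ 2) := by
    have heq : ∫ z in (ball (0 : EuclideanSpace ℝ (Fin N)) (ε⁻¹ * d))ᶜ, bubble N z ^ p
        = c₁ * ∫ z in (ball (0 : EuclideanSpace ℝ (Fin N)) (ε⁻¹ * d))ᶜ,
            (1 + ‖z‖ ^ 2) ^ (-((N : ℝ) + 2) / 2) := by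
      simp_rw [hp, bubble_rpow_eq N hN]
      rw [integral_const_mul]
    rw [heq]
    exact mul_le_mul_of_nonneg_left (htail _ hR0) hc₁0.le
  refine le_trans (mul_le_mul_of_nonneg_left htb (Real.rpow_nonneg hε.le _)) ?_
  have h2 : ε ^ ((N : ℝ) / 2 - 1) * ε ^ (2:ℕ) = ε ^ (((N : ℝ) + 2) / 2) := by
    rw [← Real.rpow_natCast ε 2, ← Real.rpow_add hε]
    congr 1
    push_cast
    ring
  have harith : ε ^ ((N : ℝ) / 2 - 1) * (c₁ * (C₀ / (ε⁻¹ * d) ^ 2))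
      = c₁ * C₀ * (ε ^ ((N : ℝ) / 2 - 1) * ε ^ (2:ℕ)) / d ^ 2 := by
    field_simp
  rw [harith, h2]
  gcongr
  linarith
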